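/- arXiv:1705.10065 — 2 statements merged into one kernel-verified Lean document; each statement's English description precedes it below -/
import Mathlib

section
/- For any base b ≥ 2, any letters x, y ∈ {1,...,b-1}, and any word u over {0,...,b-1}, the number of words in L_b occurring as scattered subwords of xxyu equals twice the number of words in L_b occurring as scattered subwords of xyu minus the number of words in L_b occurring as scattered subwords of yu. -/
/-- Number of distinct words in `L_b` (no leading zero, or empty) occurring as
scattered subwords (subsequences) of `u`. -/
def lbCount (u : List ℕ) : ℕ :=
  ((u.sublists.filter (fun v => v.head? ≠ some 0)).dedup).length

/-- `S_b(n)`: number of distinct words of `L_b` occurring as scattered subwords of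
the base-`b` expansion of `n` (most significant digit first, `rep_b(0) = ε`). -/
def Sb (b n : ℕ) : ℕ := lbCount ((Nat.digits b n).reverse)

/-- Summatory function `A_b(n) = ∑_{j<n} S_b(j)`. -/
def Asum (b n : ℕ) : ℕ := ∑ j ∈ Finset.range n, Sb b j

def Ssub (w : List ℕ) : Finset (List ℕ) := w.sublists.toFinset

lemma mem_Ssub {v w : List ℕ} : v ∈ Ssub w ↔ v.Sublist w := by simp [Ssub]

def Nsub (w : List ℕ) : Finset (List ℕ) :=
  (Ssub w).filter (fun v => v.head? ≠ some 0)

def Hsub (a : ℕ) (w : List ℕ) : Finset (List ℕ) :=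
  (Ssub w).filter (fun v => v.head? = some a)

lemma lbCount_eq (w : List ℕ) : lbCount w = (Nsub w).card := by
  rw [lbCount, Nsub, Ssub, ← List.card_toFinset, List.toFinset_filter]
  congr 1
  exact Finset.filter_congr (fun v _ => by simp)

lemma Ssub_cons (a : ℕ) (w : List ℕ) :
    Ssub (a :: w) = (Ssub w).image (a :: ·) ∪ Ssub w := by
  ext v
  simp only [mem_Ssub, Finset.mem_union, Finset.mem_image, mem_Ssub,
    List.sublist_cons_iff]
  constructor
  · rintro (h | ⟨t, rfl, ht⟩)
    · exact Or.inr h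
    · exact Or.inl ⟨t, ht, rfl⟩
  · rintro (⟨t, ht, rfl⟩ | h)
    · exact Or.inr ⟨t, rfl, ht⟩
    · exact Or.inl h

lemma tail_mem {v w : List ℕ} (h : v ∈ Ssub w) : v.tail ∈ Ssub w :=
  mem_Ssub.2 ((List.tail_sublist v).trans (mem_Ssub.1 h))

lemma inter_N (a : ℕ) (ha : a ≠ 0) (w : List ℕ) :
    (Ssub w).image (a :: ·) ∩ Nsub w = Hsub a w := by
  ext v
  simp only [Finset.mem_inter, Finset.mem_image, Nsub, Hsub, Finset.mem_filter]
  constructor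
  · rintro ⟨⟨t, ht, rfl⟩, hm, _⟩
    exact ⟨hm, rfl⟩
  · rintro ⟨hm, hh⟩
    obtain ⟨t, rfl⟩ : ∃ t, v = a :: t := by
      cases v with
      | nil => simp at hh
      | cons b t => simp only [List.head?_cons, Option.some.injEq] at hh; exact ⟨t, by rw [hh]⟩
    exact ⟨⟨t, tail_mem hm, rfl⟩, hm, by simp [ha]⟩

lemma inter_S (a : ℕ) (w : List ℕ) :
    (Ssub w).image (a :: ·) ∩ Ssub w = Hsub a w := by
  ext v
  simp only [Finset.mem_inter, Finset.mem_image, Hsub, Finset.mem_filter]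
  constructor
  · rintro ⟨⟨t, ht, rfl⟩, hm⟩
    exact ⟨hm, rfl⟩
  · rintro ⟨hm, hh⟩
    obtain ⟨t, rfl⟩ : ∃ t, v = a :: t := by
      cases v with
      | nil => simp at hh
      | cons b t => simp only [List.head?_cons, Option.some.injEq] at hh; exact ⟨t, by rw [hh]⟩
    exact ⟨⟨t, tail_mem hm, rfl⟩, hm⟩

lemma Nsub_cons (a : ℕ) (ha : a ≠ 0) (w : List ℕ) :
    Nsub (a :: w) = (Ssub w).image (a :: ·) ∪ Nsub w := by
  rw [Nsub, Ssub_cons, Finset.filter_union]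
  congr 1
  ext v
  simp only [Finset.mem_filter, Finset.mem_image, and_iff_left_iff_imp]
  rintro ⟨t, ht, rfl⟩
  simp [ha]

lemma Hsub_subset_image (a : ℕ) (w : List ℕ) :
    Hsub a w ⊆ (Ssub w).image (a :: ·) := by
  intro v hv
  rw [← inter_S a w] at hv
  exact (Finset.mem_inter.1 hv).1

lemma Hsub_cons (a : ℕ) (w : List ℕ) :
    Hsub a (a :: w) = (Ssub w).image (a :: ·) := by
  rw [Hsub, Ssub_cons, Finset.filter_union]
  have h1 : Finset.filter (fun v => v.head? = some a) ((Ssub w).image (a :: ·))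
      = (Ssub w).image (a :: ·) := by
    apply Finset.filter_true_of_mem
    rintro v hv
    obtain ⟨t, ht, rfl⟩ := Finset.mem_image.1 hv
    rfl
  rw [h1]
  exact Finset.union_eq_left.2 (Hsub_subset_image a w)

lemma cons_inj (a : ℕ) : Function.Injective (a :: · : List ℕ → List ℕ) :=
  fun _ _ h => by injection h

lemma card_image (a : ℕ) (w : List ℕ) :
    ((Ssub w).image (a :: ·)).card = (Ssub w).card :=
  Finset.card_image_of_injective _ (cons_inj a)

lemma card_N_cons {a : ℕ} (ha : a ≠ 0) (w : List ℕ) :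
    ((Nsub (a :: w)).card : ℤ)
      = (Ssub w).card + (Nsub w).card - (Hsub a w).card := by
  rw [Nsub_cons a ha]
  have h := Finset.card_union_add_card_inter ((Ssub w).image (a :: ·)) (Nsub w)
  rw [inter_N a ha, card_image] at h
  omega

lemma card_S_cons (a : ℕ) (w : List ℕ) :
    ((Ssub (a :: w)).card : ℤ)
      = 2 * (Ssub w).card - (Hsub a w).card := by
  rw [Ssub_cons]
  have h := Finset.card_union_add_card_inter ((Ssub w).image (a :: ·)) (Ssub w)
  rw [inter_S, card_image] at h
  omega

lemma card_H_cons (a : ℕ) (w : List ℕ) :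
    (Hsub a (a :: w)).card = (Ssub w).card := by
  rw [Hsub_cons, card_image]


theorem stmt3 (b x y : ℕ) (hb : 2 ≤ b) (hx : 1 ≤ x) (hxb : x < b)
    (hy : 1 ≤ y) (hyb : y < b) (u : List ℕ) (hu : ∀ d ∈ u, d < b) :
    (lbCount (x :: x :: y :: u) : ℤ) =
      2 * lbCount (x :: y :: u) - lbCount (y :: u) := by
  have hx0 : x ≠ 0 := by omega
  rw [lbCount_eq, lbCount_eq, lbCount_eq]
  rw [card_N_cons hx0 (x :: y :: u), card_S_cons x (y :: u),
    card_N_cons hx0 (y :: u), card_H_cons x (y :: u)]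
  ring
end

section
/- For all b ≥ 2, all ℓ ≥ 0, and all x ∈ {1,...,b−1}, the summatory function satisfies A_b(x·b^ℓ) = (2x−1)·(2b−1)^ℓ. -/
section Aux
open Finset

def G (u : List ℕ) : Finset (List ℕ) :=
  u.sublists.toFinset.filter (fun v => v.head? ≠ some 0)

lemma mem_G {u v : List ℕ} : v ∈ G u ↔ v.Sublist u ∧ v.head? ≠ some 0 := by
  simp [G, List.mem_sublists]

lemma lbCount_eq_card (u : List ℕ) : lbCount u = (G u).card := by
  rw [lbCount, G, ← List.card_toFinset]
  congr 1
  ext v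
  simp [List.mem_sublists]

lemma head_ne_of_append {v : List ℕ} {r : ℕ} (h : (v ++ [r]).head? ≠ some 0) :
    v.head? ≠ some 0 := by
  cases v with
  | nil => simp
  | cons a t => simpa using h

lemma G_concat (u : List ℕ) (r : ℕ) :
    G (u ++ [r]) = G u ∪ ((G u).filter (fun v => (v ++ [r]).head? ≠ some 0)).image (· ++ [r]) := by
  ext w
  simp only [mem_G, Finset.mem_union, Finset.mem_image, Finset.mem_filter]
  constructor
  · rintro ⟨hs, hg⟩
    obtain ⟨l₁, l₂, rfl, h₁, h₂⟩ := List.sublist_append_iff.1 hs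
    rcases List.sublist_singleton.1 h₂ with rfl | rfl
    · left; exact ⟨by simpa using h₁, by simpa using hg⟩
    · right
      exact ⟨l₁, ⟨⟨h₁, head_ne_of_append hg⟩, hg⟩, rfl⟩
  · rintro (⟨hs, hg⟩ | ⟨v, ⟨⟨hs, _⟩, hg⟩, rfl⟩)
    · exact ⟨hs.trans (List.sublist_append_left u [r]), hg⟩
    · exact ⟨List.Sublist.append hs (List.Sublist.refl [r]), hg⟩

lemma G_inter (u : List ℕ) (r : ℕ) :
    G u ∩ ((G u).filter (fun v => (v ++ [r]).head? ≠ some 0)).image (· ++ [r])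
      = (G u).filter (fun w => w.getLast? = some r) := by
  ext w
  simp only [Finset.mem_inter, Finset.mem_image, Finset.mem_filter, mem_G]
  constructor
  · rintro ⟨hw, v, ⟨⟨hs, _⟩, hg⟩, rfl⟩
    exact ⟨hw, List.getLast?_concat⟩
  · rintro ⟨⟨hs, hg⟩, hl⟩
    have hne : w ≠ [] := by rintro rfl; simp at hl
    have hw : w.dropLast ++ [r] = w := by
      rw [List.getLast?_eq_getLast hne, Option.some_inj] at hl
      rw [← hl]; exact List.dropLast_append_getLast hne
    have hg' : (w.dropLast ++ [r]).head? ≠ some 0 := by rw [hw]; exact hg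
    exact ⟨⟨hs, hg⟩, w.dropLast, ⟨⟨(List.dropLast_sublist w).trans hs,
      head_ne_of_append hg'⟩, hg'⟩, hw⟩

lemma nil_mem_G (u : List ℕ) : [] ∈ G u := by simp [mem_G]

lemma card_G_concat (u : List ℕ) (r : ℕ) :
    (G (u ++ [r])).card + ((G u).filter (fun w => w.getLast? = some r)).card
      + (if r = 0 then 1 else 0) = 2 * (G u).card := by
  have hinj : Function.Injective (fun v : List ℕ => v ++ [r]) := by
    intro a b h; exact List.append_cancel_right h
  have hC : (((G u).filter (fun v => (v ++ [r]).head? ≠ some 0))).card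
      + (if r = 0 then 1 else 0) = (G u).card := by
    rcases eq_or_ne r 0 with rfl | hr
    · rw [if_pos rfl]
      have : (G u).filter (fun v => (v ++ [0]).head? ≠ some 0) = (G u).erase [] := by
        ext v
        simp only [Finset.mem_filter, Finset.mem_erase, mem_G]
        constructor
        · rintro ⟨hv, hg⟩
          refine ⟨?_, hv⟩
          rintro rfl; simp at hg
        · rintro ⟨hne, hv⟩
          refine ⟨hv, ?_⟩
          cases v with
          | nil => simp at hne
          | cons a t => simpa using hv.2
      have hpos : 0 < (G u).card := Finset.card_pos.2 ⟨[], nil_mem_G u⟩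
      rw [this, Finset.card_erase_of_mem (nil_mem_G u)]
      omega
    · rw [if_neg hr, Nat.add_zero, Finset.filter_true_of_mem]
      intro v hv
      cases v with
      | nil => simpa using hr
      | cons a t => simpa using (mem_G.1 hv).2
  have hcard := Finset.card_union_add_card_inter (G u)
      (((G u).filter (fun v => (v ++ [r]).head? ≠ some 0)).image (· ++ [r]))
  rw [← G_concat, G_inter, Finset.card_image_of_injective _ hinj] at hcard
  omega

lemma sum_fiber {b : ℕ} {u : List ℕ} (hu : ∀ d ∈ u, d < b) :
    ∑ r ∈ Finset.range b, ((G u).filter (fun w => w.getLast? = some r)).card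
      + 1 = (G u).card := by
  have hs : ((G u).filter (fun w => w ≠ [])).card
      = ∑ r ∈ Finset.range b, (((G u).filter (fun w => w ≠ [])).filter
        (fun w => w.getLast?.getD 0 = r)).card := by
    apply Finset.card_eq_sum_card_fiberwise
    intro w hw
    simp only [Finset.mem_coe, Finset.mem_filter, mem_G] at hw ⊢
    obtain ⟨⟨hsub, _⟩, hne⟩ := hw
    rw [Finset.mem_range, List.getLast?_eq_getLast hne, Option.getD_some]
    exact hu _ (hsub.subset (List.getLast_mem hne))
  have hfib : ∀ r : ℕ, ((G u).filter (fun w => w ≠ [])).filter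
      (fun w => w.getLast?.getD 0 = r) = (G u).filter (fun w => w.getLast? = some r) := by
    intro r
    ext w
    simp only [Finset.mem_filter, and_assoc]
    constructor
    · rintro ⟨hw, hne, hval⟩
      rw [List.getLast?_eq_getLast hne, Option.getD_some] at hval
      exact ⟨hw, by rw [List.getLast?_eq_getLast hne, hval]⟩
    · rintro ⟨hw, hl⟩
      have hne : w ≠ [] := by rintro rfl; simp at hl
      exact ⟨hw, hne, by rw [hl]; rfl⟩
  simp only [hfib] at hs
  rw [← hs]
  have herase : (G u).filter (fun w => w ≠ []) = (G u).erase [] := by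
    ext w; simp [Finset.mem_erase, and_comm]
  have hpos : 0 < (G u).card := Finset.card_pos.2 ⟨[], nil_mem_G u⟩
  rw [herase, Finset.card_erase_of_mem (nil_mem_G u)]
  omega

lemma sum_lbCount_concat {b : ℕ} (hb : 2 ≤ b) {u : List ℕ} (hu : ∀ d ∈ u, d < b) :
    ∑ r ∈ Finset.range b, lbCount (u ++ [r]) = (2 * b - 1) * lbCount u := by
  have key : ∑ r ∈ Finset.range b, ((G (u ++ [r])).card
        + ((G u).filter (fun w => w.getLast? = some r)).card
        + (if r = 0 then 1 else 0)) = ∑ r ∈ Finset.range b, 2 * (G u).card := by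
    exact Finset.sum_congr rfl fun r _ => card_G_concat u r
  rw [Finset.sum_add_distrib, Finset.sum_add_distrib, Finset.sum_const,
    Finset.card_range, smul_eq_mul] at key
  have hif : ∑ r ∈ Finset.range b, (if r = 0 then 1 else 0) = 1 := by
    rw [Finset.sum_ite_eq' (Finset.range b) 0 (fun _ => 1)]
    simp [Nat.lt_of_lt_of_le Nat.zero_lt_two hb]
  rw [hif] at key
  have hf := sum_fiber hu
  simp only [lbCount_eq_card]
  have h2 : b * (2 * (G u).card) = 2 * b * (G u).card := by ring
  rw [h2] at key
  have hS : ∑ r ∈ Finset.range b, (G (u ++ [r])).card = 2 * b * (G u).card - (G u).card := by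
    omega
  rw [hS, Nat.sub_mul]
  simp [Nat.mul_assoc]

lemma Sb_split {b : ℕ} (hb : 2 ≤ b) (q r : ℕ) (hr : r < b) :
    Sb b (q * b + r) = lbCount ((Nat.digits b q).reverse ++ [r]) := by
  rcases Nat.eq_zero_or_pos (q * b + r) with h0 | hpos
  · have hq : q = 0 := by
      rcases Nat.mul_eq_zero.1 (show q * b = 0 by omega) with h | h
      · exact h
      · omega
    have hr0 : r = 0 := by omega
    subst hq; subst hr0
    rw [show 0 * b + 0 = 0 by ring]
    simp only [Sb, Nat.digits_zero, List.reverse_nil, List.nil_append]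
    decide
  · have h1 : 1 < b := hb
    rw [Sb, Nat.digits_def' h1 hpos]
    have hm : (q * b + r) % b = r := by
      rw [Nat.add_comm, Nat.add_mul_mod_self_right, Nat.mod_eq_of_lt hr]
    have hd : (q * b + r) / b = q := by
      rw [Nat.add_comm, Nat.add_mul_div_right _ _ (show 0 < b by omega),
        Nat.div_eq_of_lt hr, Nat.zero_add]
    rw [hm, hd, List.reverse_cons]

lemma sum_Sb {b : ℕ} (hb : 2 ≤ b) (q : ℕ) :
    ∑ r ∈ Finset.range b, Sb b (q * b + r) = (2 * b - 1) * Sb b q := by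
  have hharm : ∀ r ∈ Finset.range b, Sb b (q * b + r)
      = lbCount ((Nat.digits b q).reverse ++ [r]) := by
    intro r hr
    exact Sb_split hb q r (Finset.mem_range.1 hr)
  rw [Finset.sum_congr rfl hharm]
  rw [Sb]
  exact sum_lbCount_concat hb (fun d hd => Nat.digits_lt_base hb (List.mem_reverse.1 hd))

lemma Asum_add (b m k : ℕ) :
    Asum b (m + k) = Asum b m + ∑ r ∈ Finset.range k, Sb b (m + r) := by
  induction k with
  | zero => simp [Asum]
  | succ k ih =>
    rw [← Nat.add_assoc, Asum, Finset.sum_range_succ, ← Asum, ih, Finset.sum_range_succ]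
    ring

lemma Asum_mul {b : ℕ} (hb : 2 ≤ b) (n : ℕ) :
    Asum b (n * b) = (2 * b - 1) * Asum b n := by
  induction n with
  | zero => simp [Asum]
  | succ n ih =>
    rw [Nat.succ_mul, Asum_add, ih, sum_Sb hb,
      show Asum b (n + 1) = Asum b n + Sb b n from Finset.sum_range_succ _ _,
      Nat.mul_add]

lemma lbCount_singleton {x : ℕ} (hx : x ≠ 0) : lbCount [x] = 2 := by
  simp [lbCount, List.sublists, hx]

lemma Sb_small {b x : ℕ} (hb : 2 ≤ b) (hx : 1 ≤ x) (hxb : x < b) : Sb b x = 2 := by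
  rw [Sb, Nat.digits_def' hb (by omega), Nat.mod_eq_of_lt hxb, Nat.div_eq_of_lt hxb,
    Nat.digits_zero]
  exact lbCount_singleton (by omega)

lemma Asum_base {b : ℕ} (hb : 2 ≤ b) : ∀ x, 1 ≤ x → x ≤ b → Asum b x = 2 * x - 1 := by
  intro x
  induction x with
  | zero => omega
  | succ x ih =>
    intro _ hxb
    rcases Nat.eq_zero_or_pos x with rfl | hx
    · show Asum b 1 = 1
      rw [Asum, Finset.sum_range_one, Sb]
      simp only [Nat.digits_zero, List.reverse_nil]
      decide
    · rw [show Asum b (x + 1) = Asum b x + Sb b x from Finset.sum_range_succ _ _,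
        ih hx (by omega), Sb_small hb hx (by omega)]
      omega


end Aux

theorem stmt14 (b ℓ x : ℕ) (hb : 2 ≤ b) (hx : 1 ≤ x) (hxb : x < b) :
    Asum b (x * b ^ ℓ) = (2 * x - 1) * (2 * b - 1) ^ ℓ := by
  induction ℓ with
  | zero => simpa using Asum_base hb x hx (by omega)
  | succ ℓ ih =>
    rw [pow_succ, ← Nat.mul_assoc, Asum_mul hb, ih, pow_succ]
    ring
end
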